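/- arXiv:2104.12107 — 6 statements merged into one kernel-verified Lean document; each statement's English description precedes it below -/
import Mathlib

section
/- Let n ≥ 1 and let P be an n×n real left-stochastic matrix that is irreducible. Then for every M > 0 there exists a vector ρ^∞ ∈ ℝ^n with strictly positive entries such that P ρ^∞ = ρ^∞ and ∑_i ρ^∞_i = M, and this vector is unique among nonnegative vectors: if ρ ∈ ℝ^n has nonnegative entries, P ρ = ρ and ∑_i ρ_i = M, then ρ = ρ^∞. -/
open Finset

private lemma pow_nonneg_entries {n : ℕ} (P : Matrix (Fin n) (Fin n) ℝ)
    (hP0 : ∀ i j, 0 ≤ P i j) (k : ℕ) : ∀ i j, 0 ≤ (P ^ k) i j := by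
  induction k with
  | zero => intro i j; simp [Matrix.one_apply]; positivity
  | succ k ih =>
    intro i j
    rw [pow_succ, Matrix.mul_apply]
    exact Finset.sum_nonneg fun l _ => mul_nonneg (ih i l) (hP0 l j)

private lemma pow_stationary {n : ℕ} (P : Matrix (Fin n) (Fin n) ℝ) (ρ : Fin n → ℝ)
    (hst : P.mulVec ρ = ρ) (k : ℕ) : (P ^ k).mulVec ρ = ρ := by
  induction k with
  | zero => simp
  | succ k ih => rw [pow_succ, ← Matrix.mulVec_mulVec, hst, ih]

private lemma stationary_pos {n : ℕ} (P : Matrix (Fin n) (Fin n) ℝ)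
    (hP0 : ∀ i j, 0 ≤ P i j)
    (hirr : ∀ i j, ∃ k : ℕ, 1 ≤ k ∧ 0 < (P ^ k) i j)
    (ρ : Fin n → ℝ) (hρ0 : ∀ i, 0 ≤ ρ i) (hst : P.mulVec ρ = ρ)
    (j : Fin n) (hj : 0 < ρ j) : ∀ i, 0 < ρ i := by
  intro i
  obtain ⟨k, -, hk⟩ := hirr i j
  have h := congrFun (pow_stationary P ρ hst k) i
  rw [← h]
  unfold Matrix.mulVec dotProduct
  apply Finset.sum_pos'
  · intro l _
    exact mul_nonneg (pow_nonneg_entries P hP0 k i l) (hρ0 l)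
  · exact ⟨j, Finset.mem_univ j, mul_pos hk hj⟩

/-- An irreducible left-stochastic matrix has, for every total mass `M > 0`,
a unique nonnegative stationary vector, and it has strictly positive entries. -/
theorem perron_frobenius_stationary_vector
    (n : ℕ) (hn : 1 ≤ n) (P : Matrix (Fin n) (Fin n) ℝ)
    (hP0 : ∀ i j, 0 ≤ P i j) (hP1 : ∀ j, ∑ i, P i j = 1)
    (hirr : ∀ i j, ∃ k : ℕ, 1 ≤ k ∧ 0 < (P ^ k) i j)
    (M : ℝ) (hM : 0 < M) :
    ∃ ρinf : Fin n → ℝ, (∀ i, 0 < ρinf i) ∧ P.mulVec ρinf = ρinf ∧ (∑ i, ρinf i) = M ∧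
      ∀ ρ : Fin n → ℝ, (∀ i, 0 ≤ ρ i) → P.mulVec ρ = ρ → (∑ i, ρ i) = M → ρ = ρinf := by
  haveI : Nonempty (Fin n) := ⟨⟨0, hn⟩⟩
  -- sums of mulVec
  have hsum : ∀ v : Fin n → ℝ, ∑ i, (P.mulVec v) i = ∑ j, v j := by
    intro v
    simp only [Matrix.mulVec, dotProduct]
    rw [Finset.sum_comm]
    refine Finset.sum_congr rfl fun j _ => ?_
    rw [← Finset.sum_mul, hP1 j, one_mul]
  -- existence of a nonzero fixed vector
  have hdet : (P - 1).det = 0 := by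
    rw [← Matrix.exists_vecMul_eq_zero_iff (M := P - 1)]
    refine ⟨fun _ => 1, ?_, ?_⟩
    · intro h
      have := congrFun h ⟨0, hn⟩
      simp at this
    · funext j
      simp only [Matrix.vecMul, dotProduct, Matrix.sub_apply, Matrix.one_apply,
        one_mul, Pi.zero_apply]
      rw [Finset.sum_sub_distrib, hP1 j]
      simp
  obtain ⟨v, hv0, hv⟩ := (Matrix.exists_mulVec_eq_zero_iff (M := P - 1)).mpr hdet
  have hvfix : P.mulVec v = v := by
    have := hv
    rw [Matrix.sub_mulVec, Matrix.one_mulVec, sub_eq_zero] at this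
    exact this
  -- |v| is stationary
  set u : Fin n → ℝ := fun i => |v i| with hu
  have hle : ∀ i, u i ≤ (P.mulVec u) i := by
    intro i
    have : |(P.mulVec v) i| ≤ (P.mulVec u) i := by
      simp only [Matrix.mulVec, dotProduct]
      calc |∑ j, P i j * v j| ≤ ∑ j, |P i j * v j| := Finset.abs_sum_le_sum_abs _ _
        _ = ∑ j, P i j * u j := by
            refine Finset.sum_congr rfl fun j _ => ?_
            rw [abs_mul, abs_of_nonneg (hP0 i j)]
    rwa [hvfix] at this
  have hsumu : ∑ i, (P.mulVec u) i = ∑ i, u i := hsum u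
  have hufix : P.mulVec u = u := by
    funext i
    have := (Finset.sum_eq_sum_iff_of_le (fun i _ => hle i)).mp hsumu.symm i (Finset.mem_univ i)
    exact this.symm
  have hS : 0 < ∑ i, u i := by
    have : ∃ j, v j ≠ 0 := by
      by_contra h
      push_neg at h
      exact hv0 (funext h)
    obtain ⟨j, hj⟩ := this
    exact Finset.sum_pos' (fun i _ => abs_nonneg _)
      ⟨j, Finset.mem_univ j, abs_pos.mpr hj⟩
  set S := ∑ i, u i
  set ρinf : Fin n → ℝ := fun i => (M / S) * u i with hρinf
  have hcoef : 0 < M / S := div_pos hM hS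
  have hfix : P.mulVec ρinf = ρinf := by
    have : ρinf = (M / S) • u := rfl
    rw [this, Matrix.mulVec_smul, hufix]
  have hsumρ : ∑ i, ρinf i = M := by
    rw [hρinf]
    rw [← Finset.mul_sum]
    field_simp
    rfl
  have hupos : ∃ j, 0 < u j := by
    by_contra h
    push_neg at h
    have : S ≤ 0 := Finset.sum_nonpos fun i _ => h i
    linarith
  obtain ⟨j, hjpos⟩ := hupos
  have hρnn : ∀ i, 0 ≤ ρinf i := fun i => mul_nonneg hcoef.le (abs_nonneg _)
  have hρpos : ∀ i, 0 < ρinf i :=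
    stationary_pos P hP0 hirr ρinf hρnn hfix j (mul_pos hcoef hjpos)
  refine ⟨ρinf, hρpos, hfix, hsumρ, ?_⟩
  -- uniqueness
  intro ρ hρ0 hρfix hρsum
  -- t = min of ρ i / ρinf i
  obtain ⟨i0, -, hi0⟩ := Finset.exists_min_image Finset.univ
    (fun i => ρ i / ρinf i) Finset.univ_nonempty
  set t := ρ i0 / ρinf i0 with ht
  have htle : ∀ i, t * ρinf i ≤ ρ i := by
    intro i
    have h1 := hi0 i (Finset.mem_univ i)
    have h2 : t * ρinf i ≤ (ρ i / ρinf i) * ρinf i :=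
      mul_le_mul_of_nonneg_right h1 (hρpos i).le
    rwa [div_mul_cancel₀ _ (hρpos i).ne'] at h2
  set w : Fin n → ℝ := fun i => ρ i - t * ρinf i with hw
  have hwnn : ∀ i, 0 ≤ w i := fun i => sub_nonneg.mpr (htle i)
  have hwfix : P.mulVec w = w := by
    have : w = ρ - t • ρinf := by funext i; simp [hw, smul_eq_mul]
    rw [this, Matrix.mulVec_sub, Matrix.mulVec_smul, hρfix, hfix]
  have hwi0 : w i0 = 0 := by
    simp [hw, ht, div_mul_cancel₀ _ (hρpos i0).ne']
  have hwzero : ∀ i, w i = 0 := by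
    by_contra h
    push_neg at h
    obtain ⟨jj, hjj⟩ := h
    have hjjpos : 0 < w jj := lt_of_le_of_ne (hwnn jj) (Ne.symm hjj)
    have := stationary_pos P hP0 hirr w hwnn hwfix jj hjjpos i0
    rw [hwi0] at this
    exact lt_irrefl 0 this
  have hρeq : ∀ i, ρ i = t * ρinf i := by
    intro i
    have := hwzero i
    simp [hw] at this
    linarith
  have hsumt : M = t * M := by
    calc M = ∑ i, ρ i := hρsum.symm
      _ = ∑ i, t * ρinf i := Finset.sum_congr rfl fun i _ => hρeq i
      _ = t * ∑ i, ρinf i := (Finset.mul_sum _ _ _).symm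
      _ = t * M := by rw [hsumρ]
  have ht1 : t = 1 := by
    have h2 : t * M = 1 * M := by linarith
    exact mul_right_cancel₀ hM.ne' h2
  funext i
  rw [hρeq i, ht1, one_mul]
end

section
/- Let n ≥ 1, let P be an n×n real left-stochastic irreducible matrix, χ > 0 and M > 0, and let ρ^∞ ∈ ℝ^n be the unique nonnegative vector with P ρ^∞ = ρ^∞ and ∑_i ρ^∞_i = M. Then ρ^∞ is a globally attractive equilibrium among admissible data: every differentiable solution ρ : ℝ → ℝ^n of ρ'(t) = χ(P − I)ρ(t) whose initial datum ρ(0) has nonnegative entries and satisfies ∑_i ρ_i(0) = M converges to ρ^∞ as t → +∞, i.e. ρ_i(t) → ρ^∞_i for every i. -/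
open Finset Filter
open NormedSpace

attribute [local instance] Matrix.linftyOpNormedAddCommGroup Matrix.linftyOpNormedRing
  Matrix.linftyOpNormedAlgebra

variable {n : ℕ}

noncomputable def entryCLM (i j : Fin n) : Matrix (Fin n) (Fin n) ℝ →L[ℝ] ℝ :=
  LinearMap.toContinuousLinearMap
    { toFun := fun B => B i j
      map_add' := fun _ _ => rfl
      map_smul' := fun _ _ => rfl }

@[simp] lemma entryCLM_apply (i j : Fin n) (B : Matrix (Fin n) (Fin n) ℝ) :
    entryCLM i j B = B i j := rfl

lemma exp_entry (B : Matrix (Fin n) (Fin n) ℝ) (i j : Fin n) :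
    exp B i j = ∑' k : ℕ, ((k.factorial : ℝ)⁻¹ * (B ^ k) i j) := by
  have h := (entryCLM i j).map_tsum (expSeries_summable' (𝕂 := ℝ) B)
  rw [exp_eq_tsum ℝ]
  simpa using h

lemma exp_entry_summable (B : Matrix (Fin n) (Fin n) ℝ) (i j : Fin n) :
    Summable fun k : ℕ => ((k.factorial : ℝ)⁻¹ * (B ^ k) i j) := by
  have h := ((entryCLM i j).summable (expSeries_summable' (𝕂 := ℝ) B))
  simpa using h

section Stoch

variable {P : Matrix (Fin n) (Fin n) ℝ}
  (hP0 : ∀ i j, 0 ≤ P i j) (hP1 : ∀ j, ∑ i, P i j = 1)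

include hP0 in
lemma pow_nonneg' : ∀ k : ℕ, ∀ i j, 0 ≤ (P ^ k) i j := by
  intro k
  induction k with
  | zero => intro i j; simp [Matrix.one_apply]; positivity
  | succ m ih =>
    intro i j
    rw [pow_succ, Matrix.mul_apply]
    exact Finset.sum_nonneg fun l _ => mul_nonneg (ih i l) (hP0 l j)

include hP0 hP1 in
lemma pow_colsum : ∀ k : ℕ, ∀ j, ∑ i, (P ^ k) i j = 1 := by
  intro k
  induction k with
  | zero => intro j; simp [Matrix.one_apply]
  | succ m ih =>
    intro j
    simp only [pow_succ, Matrix.mul_apply]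
    rw [Finset.sum_comm]
    calc ∑ l, ∑ i, (P ^ m) i l * P l j = ∑ l, (∑ i, (P ^ m) i l) * P l j := by
          simp [Finset.sum_mul]
      _ = ∑ l, P l j := by simp [ih]
      _ = 1 := hP1 j

lemma smul_pow_entry (u : ℝ) (k : ℕ) (i j : Fin n) :
    ((u • P) ^ k) i j = u ^ k * (P ^ k) i j := by
  rw [smul_pow]
  simp

lemma expuP_entry (u : ℝ) (i j : Fin n) :
    exp (u • P) i j = ∑' k : ℕ, ((k.factorial : ℝ)⁻¹ * u ^ k * (P ^ k) i j) := by
  rw [exp_entry]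
  congr 1; funext k; rw [smul_pow_entry]; ring

lemma expuP_summable (u : ℝ) (i j : Fin n) :
    Summable fun k : ℕ => ((k.factorial : ℝ)⁻¹ * u ^ k * (P ^ k) i j) := by
  have := exp_entry_summable (u • P) i j
  convert this using 2 with k
  rw [smul_pow_entry]; ring

include hP0 in
lemma expuP_nonneg {u : ℝ} (hu : 0 ≤ u) (i j : Fin n) : 0 ≤ exp (u • P) i j := by
  rw [expuP_entry]
  exact tsum_nonneg fun k => mul_nonneg (by positivity) (pow_nonneg' hP0 k i j)

include hP0 in
lemma expuP_pos {u : ℝ} (hu : 0 < u)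
    (hirr : ∀ i j, ∃ k : ℕ, 1 ≤ k ∧ 0 < (P ^ k) i j) (i j : Fin n) :
    0 < exp (u • P) i j := by
  rw [expuP_entry]
  obtain ⟨k, -, hk⟩ := hirr i j
  exact Summable.tsum_pos (expuP_summable u i j)
    (fun m => mul_nonneg (by positivity) (pow_nonneg' hP0 m i j)) k
    (by positivity)

include hP0 hP1 in
lemma expuP_colsum (u : ℝ) (j : Fin n) :
    ∑ i, exp (u • P) i j = Real.exp u := by
  have hswap : ∑ i, exp (u • P) i j
      = ∑' k : ℕ, ∑ i, ((k.factorial : ℝ)⁻¹ * u ^ k * (P ^ k) i j) := by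
    simp only [expuP_entry]
    exact (Summable.tsum_finsetSum (fun i _ => expuP_summable u i j)).symm
  rw [hswap]
  have h2 : ∀ k : ℕ, ∑ i, ((k.factorial : ℝ)⁻¹ * u ^ k * (P ^ k) i j)
      = (k.factorial : ℝ)⁻¹ * u ^ k := by
    intro k
    rw [← Finset.mul_sum, pow_colsum hP0 hP1 k j, mul_one]
  simp only [h2]
  rw [Real.exp_eq_exp_ℝ, exp_eq_tsum ℝ]
  simp [smul_eq_mul]

lemma expQ_eq (u : ℝ) :
    exp (u • (P - 1)) = Real.exp (-u) • exp (u • P) := by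
  have hsplit : u • (P - 1) = u • P + (-u) • (1 : Matrix (Fin n) (Fin n) ℝ) := by
    rw [smul_sub]; module
  have hcomm : Commute (u • P) ((-u) • (1 : Matrix (Fin n) (Fin n) ℝ)) :=
    ((Commute.one_right P).smul_left u).smul_right (-u)
  rw [hsplit, Matrix.exp_add_of_commute _ _ hcomm]
  have h1 : exp ((-u) • (1 : Matrix (Fin n) (Fin n) ℝ))
      = Real.exp (-u) • (1 : Matrix (Fin n) (Fin n) ℝ) := by
    have := algebraMap_exp_comm (𝕂 := ℝ) (𝔸 := Matrix (Fin n) (Fin n) ℝ) (-u)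
    rw [Algebra.algebraMap_eq_smul_one, Algebra.algebraMap_eq_smul_one] at this
    rw [Real.exp_eq_exp_ℝ]
    exact this.symm
  rw [h1, mul_smul_comm, mul_one]

include hP0 in
lemma Q_nonneg {u : ℝ} (hu : 0 ≤ u) (i j : Fin n) : 0 ≤ exp (u • (P - 1)) i j := by
  rw [expQ_eq]
  simpa using mul_nonneg (Real.exp_nonneg (-u)) (expuP_nonneg hP0 hu i j)

include hP0 in
lemma Q_pos {u : ℝ} (hu : 0 < u)
    (hirr : ∀ i j, ∃ k : ℕ, 1 ≤ k ∧ 0 < (P ^ k) i j) (i j : Fin n) :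
    0 < exp (u • (P - 1)) i j := by
  rw [expQ_eq]
  simpa using mul_pos (Real.exp_pos (-u)) (expuP_pos hP0 hu hirr i j)

include hP0 hP1 in
lemma Q_colsum (u : ℝ) (j : Fin n) : ∑ i, exp (u • (P - 1)) i j = 1 := by
  simp only [expQ_eq, Matrix.smul_apply, smul_eq_mul]
  rw [← Finset.mul_sum, expuP_colsum hP0 hP1, ← Real.exp_add]
  simp

end Stoch

/-- Contraction estimate in ℓ¹ for nonnegative matrices with entries ≥ δ and column sums 1,
applied to zero-sum vectors. -/
lemma l1_contraction {E : Matrix (Fin n) (Fin n) ℝ} {δ : ℝ} (hδ0 : 0 ≤ δ)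
    (hE : ∀ i j, δ ≤ E i j) (hcol : ∀ j, ∑ i, E i j = 1)
    {w : Fin n → ℝ} (hw : ∑ j, w j = 0) :
    ∑ i, |E.mulVec w i| ≤ (1 - n * δ) * ∑ j, |w j| := by
  have key : ∀ i, |E.mulVec w i| ≤ ∑ j, (E i j - δ) * |w j| := by
    intro i
    have h1 : E.mulVec w i = ∑ j, (E i j - δ) * w j := by
      simp only [Matrix.mulVec, dotProduct, sub_mul]
      rw [Finset.sum_sub_distrib, ← Finset.mul_sum, hw, mul_zero, sub_zero]
    rw [h1]
    calc |∑ j, (E i j - δ) * w j| ≤ ∑ j, |(E i j - δ) * w j| := Finset.abs_sum_le_sum_abs _ _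
      _ = ∑ j, (E i j - δ) * |w j| := by
          refine Finset.sum_congr rfl fun j _ => ?_
          rw [abs_mul, abs_of_nonneg (sub_nonneg.2 (hE i j))]
  calc ∑ i, |E.mulVec w i| ≤ ∑ i, ∑ j, (E i j - δ) * |w j| :=
        Finset.sum_le_sum fun i _ => key i
    _ = ∑ j, (1 - n * δ) * |w j| := by
        rw [Finset.sum_comm]
        refine Finset.sum_congr rfl fun j _ => ?_
        rw [← Finset.sum_mul, Finset.sum_sub_distrib, hcol j, Finset.sum_const, card_univ]
        simp [nsmul_eq_mul]
    _ = (1 - n * δ) * ∑ j, |w j| := by rw [← Finset.mul_sum]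

lemma l1_nonexpansive {E : Matrix (Fin n) (Fin n) ℝ}
    (hE : ∀ i j, 0 ≤ E i j) (hcol : ∀ j, ∑ i, E i j = 1)
    {w : Fin n → ℝ} (hw : ∑ j, w j = 0) :
    ∑ i, |E.mulVec w i| ≤ ∑ j, |w j| := by
  have := l1_contraction (le_refl 0) (by simpa using hE) hcol hw
  simpa using this

lemma mass_preserved {E : Matrix (Fin n) (Fin n) ℝ} (hcol : ∀ j, ∑ i, E i j = 1)
    (w : Fin n → ℝ) : ∑ i, E.mulVec w i = ∑ j, w j := by
  simp only [Matrix.mulVec, dotProduct]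
  rw [Finset.sum_comm]
  refine Finset.sum_congr rfl fun j _ => ?_
  rw [← Finset.sum_mul, hcol j, one_mul]

set_option maxHeartbeats 1000000 in
/-- The unique nonnegative stationary vector of an irreducible left-stochastic
matrix is a globally attractive equilibrium of `ρ' = χ(P − I)ρ` among nonnegative data with
total mass `M`. -/
theorem stationary_vector_globally_attractive
    (n : ℕ) (hn : 1 ≤ n) (P : Matrix (Fin n) (Fin n) ℝ)
    (hP0 : ∀ i j, 0 ≤ P i j) (hP1 : ∀ j, ∑ i, P i j = 1)
    (hirr : ∀ i j, ∃ k : ℕ, 1 ≤ k ∧ 0 < (P ^ k) i j)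
    (χ : ℝ) (hχ : 0 < χ) (M : ℝ) (hM : 0 < M)
    (ρinf : Fin n → ℝ) (hρinf0 : ∀ i, 0 ≤ ρinf i)
    (hρinfP : P.mulVec ρinf = ρinf) (hρinfM : (∑ i, ρinf i) = M)
    (huniq : ∀ ρ : Fin n → ℝ, (∀ i, 0 ≤ ρ i) → P.mulVec ρ = ρ → (∑ i, ρ i) = M → ρ = ρinf)
    (ρ : ℝ → Fin n → ℝ)
    (hdiff : ∀ i, Differentiable ℝ fun t => ρ t i)
    (hode : ∀ i t, HasDerivAt (fun s => ρ s i)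
      (χ * ((∑ j, P i j * ρ t j) - ρ t i)) t)
    (h0 : ∀ i, 0 ≤ ρ 0 i) (hmass : (∑ i, ρ 0 i) = M) :
    ∀ i, Tendsto (fun t => ρ t i) atTop (nhds (ρinf i)) := by
  classical
  set A : Matrix (Fin n) (Fin n) ℝ := χ • (P - 1) with hA
  -- rewriting t • A
  have hsm : ∀ t : ℝ, t • A = (t * χ) • (P - 1) := by
    intro t; rw [hA, smul_smul]
  -- A acting on a vector
  have hAmul : ∀ v : Fin n → ℝ, ∀ j, A.mulVec v j = χ * ((∑ k, P j k * v k) - v j) := by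
    intro v j
    rw [hA, Matrix.smul_mulVec, Matrix.sub_mulVec, Matrix.one_mulVec]
    simp [Matrix.mulVec, dotProduct]
  -- entrywise derivative of the flow matrix
  have hEntry : ∀ (i j : Fin n) (t : ℝ),
      HasDerivAt (fun u : ℝ => exp (u • A) i j) ((exp (t • A) * A) i j) t := by
    intro i j t
    have h := (entryCLM i j).hasFDerivAt.comp_hasDerivAt t
      (hasDerivAt_exp_smul_const (𝕂 := ℝ) A t)
    exact h
  -- commuting exponentials
  have hcomm : ∀ s t : ℝ, Commute (s • A) (t • A) :=
    fun s t => ((Commute.refl A).smul_left s).smul_right t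
  have hexp_add : ∀ s t : ℝ, exp ((s + t) • A) = exp (s • A) * exp (t • A) := by
    intro s t
    rw [add_smul]
    exact exp_add_of_commute (hcomm s t)
  have hexp_inv : ∀ t : ℝ, exp (t • A) * exp ((-t) • A) = 1 := by
    intro t
    rw [← hexp_add t (-t)]
    simp
  -- the solution formula
  have hsol : ∀ t : ℝ, ρ t = (exp (t • A)).mulVec (ρ 0) := by
    have hconst : ∀ i : Fin n, ∀ t : ℝ,
        (∑ j, exp ((-t) • A) i j * ρ t j) = ρ 0 i := by
      intro i
      have hder : ∀ t : ℝ, HasDerivAt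
          (fun t => ∑ j, exp ((-t) • A) i j * ρ t j) 0 t := by
        intro t
        have hterm : ∀ j : Fin n, HasDerivAt
            (fun t => exp ((-t) • A) i j * ρ t j)
            ((exp ((-t) • A) * A) i j * (-1) * ρ t j
              + exp ((-t) • A) i j * (χ * ((∑ k, P j k * ρ t k) - ρ t j))) t := by
          intro j
          have h1 : HasDerivAt (fun t : ℝ => exp ((-t) • A) i j)
              ((exp ((-t) • A) * A) i j * (-1)) t := by
            have := (hEntry i j (-t)).comp t (hasDerivAt_neg t)
            simpa [Function.comp_def] using this
          exact h1.mul (hode j t)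
        have hsum := HasDerivAt.fun_sum (u := Finset.univ) (fun j _ => hterm j)
        have hzero : (∑ j, ((exp ((-t) • A) * A) i j * (-1) * ρ t j
            + exp ((-t) • A) i j * (χ * ((∑ k, P j k * ρ t k) - ρ t j)))) = 0 := by
          rw [Finset.sum_add_distrib]
          have e1 : (∑ j, (exp ((-t) • A) * A) i j * (-1) * ρ t j)
              = -(((exp ((-t) • A)) * A).mulVec (ρ t) i) := by
            simp only [Matrix.mulVec, dotProduct, ← Finset.sum_neg_distrib]
            exact Finset.sum_congr rfl fun j _ => by ring
          have e2 : (∑ j, exp ((-t) • A) i j * (χ * ((∑ k, P j k * ρ t k) - ρ t j)))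
              = (exp ((-t) • A)).mulVec (A.mulVec (ρ t)) i := by
            simp only [Matrix.mulVec, dotProduct]
            refine Finset.sum_congr rfl fun j _ => ?_
            rw [← hAmul (ρ t) j]
            rfl
          rw [e1, e2, Matrix.mulVec_mulVec]
          ring
        rw [← hzero]
        exact hsum
      intro t
      have hdiffg : Differentiable ℝ (fun t => ∑ j, exp ((-t) • A) i j * ρ t j) :=
        fun t => (hder t).differentiableAt
      have := is_const_of_deriv_eq_zero hdiffg (fun t => (hder t).deriv) t 0
      rw [this]
      simp [Matrix.one_apply]
    intro t
    funext i
    have h1 : (exp ((-t) • A)).mulVec (ρ t) = ρ 0 := by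
      funext i
      have := hconst i t
      simpa [Matrix.mulVec, dotProduct] using this
    have h2 := congrArg (fun v => (exp (t • A)).mulVec v) h1
    simp only [Matrix.mulVec_mulVec, hexp_inv t, Matrix.one_mulVec] at h2
    rw [← h2]
  -- the stationary vector is fixed by the flow
  have hAfix : A.mulVec ρinf = 0 := by
    funext j
    rw [hAmul]
    have : (∑ k, P j k * ρinf k) = ρinf j := by
      have := congrFun hρinfP j
      simpa [Matrix.mulVec, dotProduct] using this
    rw [this]
    simp
  have hfix : ∀ t : ℝ, (exp (t • A)).mulVec ρinf = ρinf := by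
    have hconst : ∀ i : Fin n, ∀ t : ℝ,
        (∑ j, exp (t • A) i j * ρinf j) = ρinf i := by
      intro i
      have hder : ∀ t : ℝ, HasDerivAt
          (fun t => ∑ j, exp (t • A) i j * ρinf j) 0 t := by
        intro t
        have hterm : ∀ j : Fin n, HasDerivAt
            (fun t => exp (t • A) i j * ρinf j)
            ((exp (t • A) * A) i j * ρinf j) t :=
          fun j => (hEntry i j t).mul_const (ρinf j)
        have hsum := HasDerivAt.fun_sum (u := Finset.univ) (fun j _ => hterm j)
        have hzero : (∑ j, (exp (t • A) * A) i j * ρinf j) = 0 := by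
          have : (∑ j, (exp (t • A) * A) i j * ρinf j)
              = ((exp (t • A)) * A).mulVec ρinf i := rfl
          rw [this, ← Matrix.mulVec_mulVec, hAfix]
          simp [Matrix.mulVec]
        rw [← hzero]
        exact hsum
      intro t
      have hdiffg : Differentiable ℝ (fun t => ∑ j, exp (t • A) i j * ρinf j) :=
        fun t => (hder t).differentiableAt
      have := is_const_of_deriv_eq_zero hdiffg (fun t => (hder t).deriv) t 0
      rw [this]
      simp [Matrix.one_apply]
    intro t
    funext i
    have := hconst i t
    simpa [Matrix.mulVec, dotProduct] using this
  -- quantitative contraction part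
  have hne : Nonempty (Fin n) := Fin.pos_iff_nonempty.mp hn
  obtain ⟨p0⟩ := hne
  set E1 : Matrix (Fin n) (Fin n) ℝ := exp ((1:ℝ) • A) with hE1
  have hE1eq : E1 = exp (χ • (P - 1)) := by rw [hE1, hsm]; norm_num
  have hE1pos : ∀ i j, 0 < E1 i j := by
    intro i j; rw [hE1eq]
    have := Q_pos (u := χ) hP0 hχ hirr i j
    simpa using this
  have hE1col : ∀ j, ∑ i, E1 i j = 1 := by
    intro j; rw [hE1eq]; exact Q_colsum hP0 hP1 χ j
  have hQ0 : ∀ u : ℝ, 0 ≤ u → ∀ i j, 0 ≤ exp (u • A) i j := by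
    intro u hu i j
    rw [hsm]
    exact Q_nonneg hP0 (mul_nonneg hu hχ.le) i j
  have hQcol : ∀ u : ℝ, ∀ j, ∑ i, exp (u • A) i j = 1 := by
    intro u j; rw [hsm]; exact Q_colsum hP0 hP1 _ j
  have hunene : (Finset.univ : Finset (Fin n × Fin n)).Nonempty :=
    ⟨(p0, p0), Finset.mem_univ _⟩
  set δ : ℝ := Finset.univ.inf' hunene (fun p : Fin n × Fin n => E1 p.1 p.2) with hδ
  have hδpos : 0 < δ := by
    rw [hδ, Finset.lt_inf'_iff]; exact fun p _ => hE1pos p.1 p.2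
  have hδle : ∀ i j, δ ≤ E1 i j := fun i j =>
    Finset.inf'_le _ (Finset.mem_univ ((i, j) : Fin n × Fin n))
  set c : ℝ := 1 - n * δ with hc
  have hc0 : 0 ≤ c := by
    have h1 : (n : ℝ) * δ = ∑ _i : Fin n, δ := by
      rw [Finset.sum_const, card_univ]; simp [nsmul_eq_mul]
    have h2 : (n : ℝ) * δ ≤ ∑ i, E1 i p0 := by
      rw [h1]; exact Finset.sum_le_sum fun i _ => hδle i p0
    rw [hE1col p0] at h2; rw [hc]; linarith
  have hc1 : c < 1 := by
    have h1 : (1:ℝ) ≤ (n:ℝ) := by exact_mod_cast hn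
    have : 0 < (n:ℝ) * δ := mul_pos (by linarith) hδpos
    rw [hc]; linarith
  set w0 : Fin n → ℝ := fun j => ρ 0 j - ρinf j with hw0
  have hw0sum : ∑ j, w0 j = 0 := by
    rw [hw0]; simp [Finset.sum_sub_distrib, hmass, hρinfM]
  set L1 : (Fin n → ℝ) → ℝ := fun w => ∑ i, |w i| with hL1
  have hiter : ∀ m : ℕ, ∀ w : Fin n → ℝ, (∑ j, w j = 0) →
      L1 ((exp ((m:ℝ) • A)).mulVec w) ≤ c ^ m * L1 w := by
    intro m
    induction m with
    | zero =>
      intro w hw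
      simp [Matrix.one_mulVec, hL1]
    | succ m ih =>
      intro w hw
      have hsplit : exp (((m+1 : ℕ):ℝ) • A) = E1 * exp ((m:ℝ) • A) := by
        have hcast : ((m+1:ℕ):ℝ) = 1 + (m:ℝ) := by push_cast; ring
        rw [hcast, hexp_add, hE1]
      rw [hsplit, ← Matrix.mulVec_mulVec]
      have hwm : ∑ j, (exp ((m:ℝ) • A)).mulVec w j = 0 := by
        rw [mass_preserved (hQcol (m:ℝ)) w]; exact hw
      calc L1 (E1.mulVec ((exp ((m:ℝ) • A)).mulVec w))
          ≤ (1 - n * δ) * L1 ((exp ((m:ℝ) • A)).mulVec w) :=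
            l1_contraction hδpos.le hδle hE1col hwm
        _ ≤ c * (c ^ m * L1 w) := by
            rw [← hc]
            exact mul_le_mul_of_nonneg_left (ih w hw) hc0
        _ = c ^ (m+1) * L1 w := by ring
  have hbound : ∀ t : ℝ, 0 ≤ t → L1 (fun i => ρ t i - ρinf i) ≤ c ^ (⌊t⌋₊) * L1 w0 := by
    intro t ht
    have hdw : (fun i => ρ t i - ρinf i) = (exp (t • A)).mulVec w0 := by
      have hw0' : w0 = ρ 0 - ρinf := rfl
      rw [hw0', Matrix.mulVec_sub, ← hsol t, hfix t]
      rfl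
    have hr0 : 0 ≤ t - (⌊t⌋₊ : ℝ) := sub_nonneg.2 (Nat.floor_le ht)
    have hts : exp (t • A) = exp ((t - (⌊t⌋₊:ℝ)) • A) * exp (((⌊t⌋₊:ℕ):ℝ) • A) := by
      rw [← hexp_add]; norm_num
    rw [hdw, hts, ← Matrix.mulVec_mulVec]
    have hwm : ∑ j, (exp (((⌊t⌋₊:ℕ):ℝ) • A)).mulVec w0 j = 0 := by
      rw [mass_preserved (hQcol _) w0]; exact hw0sum
    calc L1 ((exp ((t - (⌊t⌋₊:ℝ)) • A)).mulVec ((exp (((⌊t⌋₊:ℕ):ℝ) • A)).mulVec w0))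
        ≤ L1 ((exp (((⌊t⌋₊:ℕ):ℝ) • A)).mulVec w0) :=
          l1_nonexpansive (hQ0 _ hr0) (hQcol _) hwm
      _ ≤ c ^ (⌊t⌋₊) * L1 w0 := hiter _ w0 hw0sum
  intro i
  have habs : Tendsto (fun t => |ρ t i - ρinf i|) atTop (nhds 0) := by
    have hup : Tendsto (fun t : ℝ => c ^ (⌊t⌋₊) * L1 w0) atTop (nhds 0) := by
      have h1 : Tendsto (fun t : ℝ => c ^ (⌊t⌋₊)) atTop (nhds 0) :=
        (tendsto_pow_atTop_nhds_zero_of_lt_one hc0 hc1).comp tendsto_nat_floor_atTop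
      simpa using h1.mul_const (L1 w0)
    apply tendsto_of_tendsto_of_tendsto_of_le_of_le' tendsto_const_nhds hup
    · exact Eventually.of_forall fun t => abs_nonneg _
    · filter_upwards [eventually_ge_atTop (0:ℝ)] with t ht
      calc |ρ t i - ρinf i| ≤ L1 (fun i => ρ t i - ρinf i) :=
            Finset.single_le_sum (f := fun j => |ρ t j - ρinf j|)
              (fun j _ => abs_nonneg _) (Finset.mem_univ i)
        _ ≤ c ^ (⌊t⌋₊) * L1 w0 := hbound t ht
  have hsub : Tendsto (fun t => ρ t i - ρinf i) atTop (nhds 0) :=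
    (tendsto_zero_iff_abs_tendsto_zero _).2 habs
  have h2 := hsub.add_const (ρinf i)
  simpa using h2
end

section
/- Let n ≥ 1 and let P be an n×n real left-stochastic irreducible matrix. Then every complex eigenvalue λ of P satisfies |λ| ≤ 1; the number 1 is an eigenvalue of P of algebraic multiplicity one; and every eigenvalue λ ≠ 1 of P satisfies Re λ < 1 (so that all nonzero eigenvalues of P − I have strictly negative real part). -/
open Finset

open Matrix Polynomial

namespace StochasticAux

variable {n : ℕ}

lemma pow_entry_nonneg (P : Matrix (Fin n) (Fin n) ℝ) (hP0 : ∀ i j, 0 ≤ P i j) :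
    ∀ k i j, 0 ≤ (P ^ k) i j := by
  intro k
  induction k with
  | zero =>
    intro i j
    rw [pow_zero, Matrix.one_apply]
    split <;> norm_num
  | succ k ih =>
    intro i j
    rw [pow_succ, Matrix.mul_apply]
    exact Finset.sum_nonneg fun l _ => mul_nonneg (ih i l) (hP0 l j)

lemma pow_fix (P : Matrix (Fin n) (Fin n) ℝ) {v : Fin n → ℝ} (hv : P.mulVec v = v) :
    ∀ k, (P ^ k).mulVec v = v := by
  intro k
  induction k with
  | zero => simp
  | succ k ih => rw [pow_succ', ← Matrix.mulVec_mulVec, ih, hv]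

lemma pos_of_nonneg (P : Matrix (Fin n) (Fin n) ℝ) (hP0 : ∀ i j, 0 ≤ P i j)
    (hirr : ∀ i j, ∃ k : ℕ, 1 ≤ k ∧ 0 < (P ^ k) i j)
    {v : Fin n → ℝ} (hv : P.mulVec v = v) (hvnn : ∀ i, 0 ≤ v i) {j : Fin n} (hj : 0 < v j) :
    ∀ i, 0 < v i := by
  intro i
  obtain ⟨k, -, hk⟩ := hirr i j
  have h1 : (P ^ k).mulVec v = v := pow_fix P hv k
  have h2 : v i = ∑ l, (P ^ k) i l * v l := by
    conv_lhs => rw [← h1]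
    simp [Matrix.mulVec, dotProduct]
  have h3 : (P ^ k) i j * v j ≤ ∑ l, (P ^ k) i l * v l :=
    Finset.single_le_sum (f := fun l => (P ^ k) i l * v l)
      (fun l _ => mul_nonneg (pow_entry_nonneg P hP0 k i l) (hvnn l)) (Finset.mem_univ j)
  have h4 : 0 < (P ^ k) i j * v j := mul_pos hk hj
  rw [h2]
  exact lt_of_lt_of_le h4 h3

lemma abs_fix (P : Matrix (Fin n) (Fin n) ℝ) (hP0 : ∀ i j, 0 ≤ P i j)
    (hP1 : ∀ j, ∑ i, P i j = 1) {v : Fin n → ℝ} (hv : P.mulVec v = v) :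
    P.mulVec (fun i => |v i|) = fun i => |v i| := by
  set a : Fin n → ℝ := fun i => |v i| with ha
  have key : ∀ i, a i ≤ P.mulVec a i := by
    intro i
    have h1 : |(P.mulVec v) i| ≤ P.mulVec a i := by
      simp only [Matrix.mulVec, dotProduct, ha]
      calc |∑ j, P i j * v j| ≤ ∑ j, |P i j * v j| := Finset.abs_sum_le_sum_abs _ _
        _ = ∑ j, P i j * |v j| := by
            refine Finset.sum_congr rfl fun j _ => ?_
            rw [abs_mul, abs_of_nonneg (hP0 i j)]
    rw [hv] at h1
    exact h1
  have hsum : ∑ i, P.mulVec a i = ∑ i, a i := by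
    simp only [Matrix.mulVec, dotProduct]
    rw [Finset.sum_comm]
    refine Finset.sum_congr rfl fun j _ => ?_
    rw [← Finset.sum_mul, hP1 j, one_mul]
  have h0 : ∑ i, (P.mulVec a i - a i) = 0 := by
    rw [Finset.sum_sub_distrib, hsum, sub_self]
  have hz := (Finset.sum_eq_zero_iff_of_nonneg
    (fun i _ => sub_nonneg.mpr (key i))).mp h0
  funext i
  have := hz i (Finset.mem_univ i)
  linarith

lemma sign_lemma (P : Matrix (Fin n) (Fin n) ℝ) (hP0 : ∀ i j, 0 ≤ P i j)
    (hP1 : ∀ j, ∑ i, P i j = 1) (hirr : ∀ i j, ∃ k : ℕ, 1 ≤ k ∧ 0 < (P ^ k) i j)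
    {v : Fin n → ℝ} (hv : P.mulVec v = v) (hvne : v ≠ 0) :
    (∀ i, 0 < v i) ∨ (∀ i, v i < 0) := by
  set a : Fin n → ℝ := fun i => |v i| with ha
  have haf : P.mulVec a = a := abs_fix P hP0 hP1 hv
  set p : Fin n → ℝ := (1/2 : ℝ) • (a + v) with hp
  set q : Fin n → ℝ := (1/2 : ℝ) • (a - v) with hq
  have hpf : P.mulVec p = p := by
    rw [hp, Matrix.mulVec_smul, Matrix.mulVec_add, haf, hv]
  have hqf : P.mulVec q = q := by
    rw [hq, Matrix.mulVec_smul, Matrix.mulVec_sub, haf, hv]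
  have hpnn : ∀ i, 0 ≤ p i := by
    intro i
    have := neg_abs_le (v i)
    simp only [hp, ha, Pi.smul_apply, Pi.add_apply, smul_eq_mul]
    linarith
  have hqnn : ∀ i, 0 ≤ q i := by
    intro i
    have := le_abs_self (v i)
    simp only [hq, ha, Pi.smul_apply, Pi.sub_apply, smul_eq_mul]
    linarith
  have hprod : ∀ i, p i * q i = 0 := by
    intro i
    have h2 : a i ^ 2 = v i ^ 2 := sq_abs (v i)
    simp only [hp, hq, ha, Pi.smul_apply, Pi.add_apply, Pi.sub_apply, smul_eq_mul] at h2 ⊢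
    nlinarith
  obtain ⟨j, hj⟩ := Function.ne_iff.mp hvne
  have haj : 0 < a j := abs_pos.mpr hj
  by_cases hpz : p = 0
  · right
    have hqa : q = a := by
      funext i
      have := congrFun hpz i
      simp only [hp, hq, ha, Pi.smul_apply, Pi.add_apply, Pi.sub_apply, smul_eq_mul,
        Pi.zero_apply] at this ⊢
      linarith
    have hqpos : ∀ i, 0 < q i := by
      rw [hqa]
      exact pos_of_nonneg P hP0 hirr haf (fun i => abs_nonneg (v i)) haj
    intro i
    have h1 := congrFun hpz i
    simp only [hp, Pi.smul_apply, Pi.add_apply, smul_eq_mul, Pi.zero_apply] at h1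
    have h2 := hqpos i
    rw [hqa] at h2
    simp only [ha] at h1 h2
    linarith
  · left
    obtain ⟨j', hj'⟩ := Function.ne_iff.mp hpz
    have hpj' : 0 < p j' := lt_of_le_of_ne (hpnn j') (Ne.symm hj')
    have hppos : ∀ i, 0 < p i := pos_of_nonneg P hP0 hirr hpf hpnn hpj'
    have hqz : ∀ i, q i = 0 := by
      intro i
      have := hprod i
      rcases mul_eq_zero.mp this with h | h
      · exact absurd h (ne_of_gt (hppos i))
      · exact h
    intro i
    have h1 := hppos i
    have h2 := hqz i
    simp only [hp, hq, ha, Pi.smul_apply, Pi.add_apply, Pi.sub_apply, smul_eq_mul] at h1 h2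
    linarith

lemma exists_perron (hn : 1 ≤ n) (P : Matrix (Fin n) (Fin n) ℝ) (hP0 : ∀ i j, 0 ≤ P i j)
    (hP1 : ∀ j, ∑ i, P i j = 1) (hirr : ∀ i j, ∃ k : ℕ, 1 ≤ k ∧ 0 < (P ^ k) i j) :
    ∃ u : Fin n → ℝ, P.mulVec u = u ∧ ∀ i, 0 < u i := by
  have h1 : ((1 : Matrix (Fin n) (Fin n) ℝ) - Pᵀ).mulVec (fun _ => 1) = 0 := by
    funext i
    simp only [Matrix.sub_mulVec, Matrix.one_mulVec, Pi.sub_apply, Pi.zero_apply]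
    simp only [Matrix.mulVec, dotProduct, Matrix.transpose_apply, mul_one]
    rw [hP1 i]
    norm_num
  have honesne : (fun _ : Fin n => (1:ℝ)) ≠ 0 :=
    Function.ne_iff.mpr ⟨⟨0, hn⟩, one_ne_zero⟩
  have hdetT : ((1 : Matrix (Fin n) (Fin n) ℝ) - Pᵀ).det = 0 :=
    Matrix.exists_mulVec_eq_zero_iff.mp ⟨_, honesne, h1⟩
  have hdet : ((1 : Matrix (Fin n) (Fin n) ℝ) - P).det = 0 := by
    rw [← Matrix.det_transpose, Matrix.transpose_sub, Matrix.transpose_one]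
    exact hdetT
  obtain ⟨v, hvne, hv0⟩ := Matrix.exists_mulVec_eq_zero_iff.mpr hdet
  rw [Matrix.sub_mulVec, Matrix.one_mulVec, sub_eq_zero] at hv0
  have hv : P.mulVec v = v := hv0.symm
  rcases sign_lemma P hP0 hP1 hirr hv hvne with h | h
  · exact ⟨v, hv, h⟩
  · refine ⟨-v, ?_, fun i => by simpa using h i⟩
    rw [Matrix.mulVec_neg, hv]

lemma real_ker (hn : 1 ≤ n) (P : Matrix (Fin n) (Fin n) ℝ) (hP0 : ∀ i j, 0 ≤ P i j)
    (hP1 : ∀ j, ∑ i, P i j = 1) (hirr : ∀ i j, ∃ k : ℕ, 1 ≤ k ∧ 0 < (P ^ k) i j)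
    {u : Fin n → ℝ} (hu : P.mulVec u = u) (hupos : ∀ i, 0 < u i)
    {a : Fin n → ℝ} (haf : P.mulVec a = a) :
    ∃ c : ℝ, a = c • u := by
  set i0 : Fin n := ⟨0, hn⟩
  set c : ℝ := a i0 / u i0 with hc
  refine ⟨c, ?_⟩
  set d : Fin n → ℝ := a - c • u with hd
  have hdf : P.mulVec d = d := by
    rw [hd, Matrix.mulVec_sub, Matrix.mulVec_smul, haf, hu]
  have hd0 : d i0 = 0 := by
    have hu0 : u i0 ≠ 0 := (hupos i0).ne'
    simp only [hd, hc, Pi.sub_apply, Pi.smul_apply, smul_eq_mul]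
    rw [div_mul_cancel₀ _ hu0, sub_self]
  have hdz : d = 0 := by
    by_contra hne
    rcases sign_lemma P hP0 hP1 hirr hdf hne with h | h
    · exact absurd hd0 (ne_of_gt (h i0))
    · exact absurd hd0 (ne_of_lt (h i0))
  rw [hd] at hdz
  exact sub_eq_zero.mp hdz

end StochasticAux
/-- Spectral properties of an irreducible left-stochastic matrix: all complex
eigenvalues have modulus at most 1, the eigenvalue 1 has algebraic multiplicity one, and
every eigenvalue different from 1 has real part strictly less than 1. -/
theorem stochastic_irreducible_spectrum
    (n : ℕ) (hn : 1 ≤ n) (P : Matrix (Fin n) (Fin n) ℝ)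
    (hP0 : ∀ i j, 0 ≤ P i j) (hP1 : ∀ j, ∑ i, P i j = 1)
    (hirr : ∀ i j, ∃ k : ℕ, 1 ≤ k ∧ 0 < (P ^ k) i j) :
    (∀ lam ∈ spectrum ℂ (P.map fun x => (x : ℂ)), ‖lam‖ ≤ 1) ∧
    ((1 : ℂ) ∈ spectrum ℂ (P.map fun x => (x : ℂ))) ∧
    (Matrix.charpoly (P.map fun x => (x : ℂ))).rootMultiplicity 1 = 1 ∧
    (∀ lam ∈ spectrum ℂ (P.map fun x => (x : ℂ)), lam ≠ 1 → lam.re < 1) := by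
  set M : Matrix (Fin n) (Fin n) ℂ := P.map (fun x => (x : ℂ)) with hM
  have hMc1 : ∀ j, ∑ i, M i j = 1 := by
    intro j
    simp only [hM, Matrix.map_apply]
    exact_mod_cast congrArg Complex.ofReal (hP1 j)
  -- Part 1
  have part1 : ∀ lam ∈ spectrum ℂ M, ‖lam‖ ≤ 1 := by
    intro lam hlam
    rw [spectrum.mem_iff] at hlam
    have hdet : (algebraMap ℂ (Matrix (Fin n) (Fin n) ℂ) lam - M).det = 0 := by
      by_contra h
      exact hlam ((Matrix.isUnit_iff_isUnit_det _).mpr (isUnit_iff_ne_zero.mpr h))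
    have hAT : (algebraMap ℂ (Matrix (Fin n) (Fin n) ℂ) lam - M)ᵀ
        = algebraMap ℂ (Matrix (Fin n) (Fin n) ℂ) lam - Mᵀ := by
      rw [Matrix.transpose_sub, Matrix.algebraMap_eq_diagonal, Matrix.diagonal_transpose]
    have hdetT : (algebraMap ℂ (Matrix (Fin n) (Fin n) ℂ) lam - Mᵀ).det = 0 := by
      rw [← hAT, Matrix.det_transpose]
      exact hdet
    obtain ⟨v, hvne, hv0⟩ := Matrix.exists_mulVec_eq_zero_iff.mpr hdetT
    rw [Matrix.sub_mulVec, Algebra.algebraMap_eq_smul_one, Matrix.smul_mulVec,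
      Matrix.one_mulVec, sub_eq_zero] at hv0
    obtain ⟨i, -, hmax⟩ := Finset.exists_max_image Finset.univ (fun k => ‖v k‖)
      ⟨⟨0, hn⟩, Finset.mem_univ _⟩
    obtain ⟨j, hj⟩ := Function.ne_iff.mp hvne
    have hvj : 0 < ‖v j‖ := by
      simpa using norm_pos_iff.mpr hj
    have hvi : 0 < ‖v i‖ := lt_of_lt_of_le hvj (hmax j (Finset.mem_univ j))
    have key : ‖lam‖ * ‖v i‖ ≤ 1 * ‖v i‖ := by
      calc ‖lam‖ * ‖v i‖ = ‖lam * v i‖ := (norm_mul _ _).symm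
        _ = ‖(Mᵀ.mulVec v) i‖ := by
            rw [← hv0]; simp
        _ = ‖∑ j, ((P j i : ℂ)) * v j‖ := by
            simp only [Matrix.mulVec, dotProduct, Matrix.transpose_apply, hM,
              Matrix.map_apply]
        _ ≤ ∑ j, ‖((P j i : ℂ)) * v j‖ := norm_sum_le _ _
        _ = ∑ j, P j i * ‖v j‖ := by
            refine Finset.sum_congr rfl fun j _ => ?_
            rw [norm_mul, Complex.norm_real, Real.norm_of_nonneg (hP0 j i)]
        _ ≤ ∑ j, P j i * ‖v i‖ := by
            refine Finset.sum_le_sum fun j _ => ?_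
            exact mul_le_mul_of_nonneg_left (hmax j (Finset.mem_univ j)) (hP0 j i)
        _ = (∑ j, P j i) * ‖v i‖ := by rw [← Finset.sum_mul]
        _ = 1 * ‖v i‖ := by rw [hP1 i]
    exact le_of_mul_le_mul_right key hvi
  -- det (1 - M) = 0
  have hdet1 : ((1 : Matrix (Fin n) (Fin n) ℂ) - M).det = 0 := by
    have h1 : ((1 : Matrix (Fin n) (Fin n) ℂ) - Mᵀ).mulVec (fun _ => 1) = 0 := by
      funext i
      simp only [Matrix.sub_mulVec, Matrix.one_mulVec, Pi.sub_apply, Pi.zero_apply]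
      simp only [Matrix.mulVec, dotProduct, Matrix.transpose_apply, mul_one]
      rw [hMc1 i]
      norm_num
    have honesne : (fun _ : Fin n => (1:ℂ)) ≠ 0 :=
      Function.ne_iff.mpr ⟨⟨0, hn⟩, one_ne_zero⟩
    have hdetT : ((1 : Matrix (Fin n) (Fin n) ℂ) - Mᵀ).det = 0 :=
      Matrix.exists_mulVec_eq_zero_iff.mp ⟨_, honesne, h1⟩
    rw [← Matrix.det_transpose, Matrix.transpose_sub, Matrix.transpose_one]
    exact hdetT
  have part2 : (1 : ℂ) ∈ spectrum ℂ M := by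
    rw [spectrum.mem_iff]
    intro hunit
    rw [Matrix.isUnit_iff_isUnit_det, _root_.map_one] at hunit
    rw [hdet1] at hunit
    exact (not_isUnit_zero : ¬ IsUnit (0:ℂ)) hunit
  -- Part 4
  have part4 : ∀ lam ∈ spectrum ℂ M, lam ≠ 1 → lam.re < 1 := by
    intro lam hlam hne
    have h1 := part1 lam hlam
    have hre : lam.re ≤ 1 := le_trans (Complex.re_le_norm lam) h1
    rcases lt_or_eq_of_le hre with h | h
    · exact h
    · exfalso
      apply hne
      have hsq : Complex.normSq lam ≤ 1 := by
        have := Complex.sq_norm lam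
        nlinarith [norm_nonneg lam]
      rw [Complex.normSq_apply] at hsq
      have him : lam.im = 0 := by nlinarith [sq_nonneg lam.im]
      exact Complex.ext (by simpa using h) (by simpa using him)
  -- Part 3: algebraic multiplicity of the eigenvalue 1 is one
  obtain ⟨u, hu, hupos⟩ := StochasticAux.exists_perron hn P hP0 hP1 hirr
  set uc : Fin n → ℂ := fun i => (u i : ℂ) with huc
  have hucfix : M.mulVec uc = uc := by
    funext i
    have h := congrFun hu i
    simp only [Matrix.mulVec, dotProduct] at h ⊢
    simp only [hM, Matrix.map_apply, huc]
    exact_mod_cast congrArg Complex.ofReal h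
  have hucne : uc ≠ 0 := Function.ne_iff.mpr ⟨⟨0, hn⟩, by
    simp only [huc, Pi.zero_apply]
    exact_mod_cast (hupos ⟨0, hn⟩).ne'⟩
  set φ : Module.End ℂ (Fin n → ℂ) := Matrix.toLin' (M - 1) with hφ
  have hφapp : ∀ x, φ x = M.mulVec x - x := by
    intro x
    rw [hφ, Matrix.toLin'_apply, Matrix.sub_mulVec, Matrix.one_mulVec]
  have hker_eq : LinearMap.ker φ = Submodule.span ℂ {uc} := by
    apply le_antisymm
    · intro x hx
      rw [LinearMap.mem_ker, hφapp, sub_eq_zero] at hx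
      set a : Fin n → ℝ := fun i => (x i).re with hadef
      set b : Fin n → ℝ := fun i => (x i).im with hbdef
      have hax : P.mulVec a = a := by
        funext i
        have h := congrFun hx i
        simp only [Matrix.mulVec, dotProduct, hM, Matrix.map_apply] at h ⊢
        have h2 := congrArg Complex.re h
        rw [Complex.re_sum] at h2
        simp only [Complex.re_ofReal_mul] at h2
        simpa [hadef] using h2
      have hbx : P.mulVec b = b := by
        funext i
        have h := congrFun hx i
        simp only [Matrix.mulVec, dotProduct, hM, Matrix.map_apply] at h ⊢
        have h2 := congrArg Complex.im h
        rw [Complex.im_sum] at h2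
        simp only [Complex.mul_im, Complex.ofReal_re, Complex.ofReal_im, zero_mul,
          add_zero] at h2
        simpa [hbdef] using h2
      obtain ⟨ca, hca⟩ := StochasticAux.real_ker hn P hP0 hP1 hirr hu hupos hax
      obtain ⟨cb, hcb⟩ := StochasticAux.real_ker hn P hP0 hP1 hirr hu hupos hbx
      rw [Submodule.mem_span_singleton]
      refine ⟨(ca : ℂ) + (cb : ℂ) * Complex.I, ?_⟩
      funext i
      have h1 : (x i).re = ca * u i := by
        have := congrFun hca i
        simpa [hadef] using this
      have h2 : (x i).im = cb * u i := by
        have := congrFun hcb i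
        simpa [hbdef] using this
      simp only [Pi.smul_apply, smul_eq_mul, huc]
      rw [← Complex.re_add_im (x i), h1, h2]
      push_cast
      ring
    · rw [Submodule.span_le, Set.singleton_subset_iff]
      rw [SetLike.mem_coe, LinearMap.mem_ker, hφapp, hucfix, sub_self]
  have hsum0 : ∀ x : Fin n → ℂ, ∑ i, (φ x) i = 0 := by
    intro x
    simp only [hφapp, Pi.sub_apply]
    rw [Finset.sum_sub_distrib]
    have hms : ∑ i, (M.mulVec x) i = ∑ i, x i := by
      simp only [Matrix.mulVec, dotProduct]
      rw [Finset.sum_comm]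
      refine Finset.sum_congr rfl fun j _ => ?_
      rw [← Finset.sum_mul, hMc1 j, one_mul]
    rw [hms, sub_self]
  have hsumu : ∑ i, uc i ≠ 0 := by
    have hpos : (0:ℝ) < ∑ i, u i :=
      Finset.sum_pos (fun i _ => hupos i) ⟨⟨0, hn⟩, Finset.mem_univ _⟩
    have h1 : ((∑ i, u i : ℝ) : ℂ) ≠ 0 := by exact_mod_cast hpos.ne'
    rw [Complex.ofReal_sum] at h1
    simpa [huc] using h1
  have hker2 : ∀ x : Fin n → ℂ, φ (φ x) = 0 → φ x = 0 := by
    intro x hxx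
    have hy : φ x ∈ LinearMap.ker φ := LinearMap.mem_ker.mpr hxx
    rw [hker_eq, Submodule.mem_span_singleton] at hy
    obtain ⟨c, hc⟩ := hy
    have hs := hsum0 x
    rw [← hc] at hs
    simp only [Pi.smul_apply, smul_eq_mul] at hs
    rw [← Finset.mul_sum] at hs
    rcases mul_eq_zero.mp hs with h | h
    · rw [← hc, h, zero_smul]
    · exact absurd h hsumu
  have hpowker : ∀ (k : ℕ) (x : Fin n → ℂ), (φ ^ k) x = 0 → φ x = 0 := by
    intro k
    induction k with
    | zero =>
      intro x h
      simp only [pow_zero, Module.End.one_apply] at h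
      rw [h, map_zero]
    | succ k ih =>
      intro x h
      have h' : (φ ^ k) (φ x) = 0 := by
        rw [← Module.End.mul_apply, ← pow_succ]
        exact h
      exact hker2 x (ih (φ x) h')
  have hmax_eq : Module.End.maxGenEigenspace φ 0 = LinearMap.ker φ := by
    apply le_antisymm
    · intro x hx
      rw [Module.End.mem_maxGenEigenspace] at hx
      obtain ⟨k, hk⟩ := hx
      simp only [zero_smul, sub_zero] at hk
      exact LinearMap.mem_ker.mpr (hpowker k x hk)
    · intro x hx
      rw [Module.End.mem_maxGenEigenspace]
      exact ⟨1, by simpa using LinearMap.mem_ker.mp hx⟩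
  have hcomp : M.charpoly.comp (X + C 1) = (M - 1).charpoly := by
    have hhom : ∀ pp : ℂ[X], (Polynomial.aeval (X + C 1 : ℂ[X])) pp = pp.comp (X + C 1) := by
      intro pp
      rw [Polynomial.aeval_def, Polynomial.comp, Polynomial.algebraMap_eq]
    have h1 : M.charpoly.comp (X + C 1)
        = (Polynomial.aeval (X + C 1 : ℂ[X])).toRingHom (Matrix.charmatrix M).det :=
      (hhom _).symm
    rw [h1, RingHom.map_det]
    show _ = (Matrix.charmatrix (M - 1)).det
    congr 1
    ext i j
    rw [RingHom.mapMatrix_apply, Matrix.map_apply]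
    by_cases hij : i = j
    · subst hij
      rw [Matrix.charmatrix_apply_eq, Matrix.charmatrix_apply_eq]
      simp only [AlgHom.toRingHom_eq_coe, RingHom.coe_coe, map_sub, Polynomial.aeval_X,
        Polynomial.aeval_C, Polynomial.algebraMap_eq, Matrix.sub_apply, Matrix.one_apply_eq,
        _root_.map_one]
      ring_nf
    · rw [Matrix.charmatrix_apply_ne _ _ _ hij, Matrix.charmatrix_apply_ne _ _ _ hij]
      simp only [AlgHom.toRingHom_eq_coe, RingHom.coe_coe, map_neg, Polynomial.aeval_C,
        Polynomial.algebraMap_eq, Matrix.sub_apply, Matrix.one_apply_ne hij, sub_zero]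
  have hroot1 : M.charpoly.rootMultiplicity 1 = ((M - 1)).charpoly.natTrailingDegree := by
    rw [Polynomial.rootMultiplicity_eq_natTrailingDegree, hcomp]
  have hlin : (M - 1).charpoly = LinearMap.charpoly φ := by
    conv_rhs => rw [hφ, ← LinearMap.charpoly_toMatrix (Matrix.toLin' (M - 1))
      (Pi.basisFun ℂ (Fin n)), LinearMap.toMatrix_eq_toMatrix', LinearMap.toMatrix'_toLin']
  have final : M.charpoly.rootMultiplicity 1 = 1 := by
    rw [hroot1, hlin, ← LinearMap.finrank_maxGenEigenspace_zero_eq φ, hmax_eq, hker_eq,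
      finrank_span_singleton hucne]
  exact ⟨part1, part2, final, part4⟩
end

section
/- Let n ≥ 1, let ρ^∞ ∈ ℝ^n have strictly positive entries, set c := min_i ρ^∞_i > 0, and let μ > 0 and ν₁ > ν₂ be real numbers. Suppose m : ℝ → ℝ^n is differentiable, m_i(t) ≥ 0 for all i and all t ≥ 0, and d/dt ∑_i ρ^∞_i m_i(t) = μ(ν₂ − ν₁) ∑_i (ρ^∞_i)² m_i(t) for all t ≥ 0. Then ∑_i ρ^∞_i m_i(t) ≤ e^{−cμ(ν₁−ν₂)t} ∑_i ρ^∞_i m_i(0) for all t ≥ 0, and consequently m_i(t) → 0 as t → +∞ for every i. -/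
open Finset Filter

/-- If `ν₁ > ν₂`, the linearised total weighted viral load
`∑_i ρ^∞_i m_i` decays exponentially (rate at least `cμ(ν₁−ν₂)` with
`c = min_i ρ^∞_i`) and every mean viral load `m_i` tends to 0: the disease-free
state is locally asymptotically stable. -/
theorem infection_eradication_nu1_gt_nu2
    (n : ℕ) (hn : 1 ≤ n) (ρinf : Fin n → ℝ) (hρinf : ∀ i, 0 < ρinf i)
    (c : ℝ) (hc : IsLeast (Set.range ρinf) c)
    (μ ν₁ ν₂ : ℝ) (hμ : 0 < μ) (hν : ν₂ < ν₁)
    (m : ℝ → Fin n → ℝ)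
    (hmdiff : ∀ i, Differentiable ℝ fun t => m t i)
    (hm0 : ∀ i, ∀ t : ℝ, 0 ≤ t → 0 ≤ m t i)
    (hode : ∀ t : ℝ, 0 ≤ t → HasDerivAt (fun s => ∑ i, ρinf i * m s i)
      (μ * (ν₂ - ν₁) * ∑ i, (ρinf i) ^ 2 * m t i) t) :
    (∀ t : ℝ, 0 ≤ t →
      ∑ i, ρinf i * m t i ≤ Real.exp (-(c * μ * (ν₁ - ν₂)) * t) * ∑ i, ρinf i * m 0 i) ∧
    (∀ i, Tendsto (fun t => m t i) atTop (nhds 0)) := by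
  set K : ℝ := c * μ * (ν₁ - ν₂) with hK
  have hcpos : 0 < c := by
    obtain ⟨i, hi⟩ := hc.1
    exact hi ▸ hρinf i
  have hKpos : 0 < K := by
    have := sub_pos.mpr hν
    positivity
  set f : ℝ → ℝ := fun s => ∑ i, ρinf i * m s i with hf
  have hfdiff : Differentiable ℝ f := by
    apply Differentiable.fun_sum
    intro i _
    exact (hmdiff i).const_mul _
  set g : ℝ → ℝ := fun s => Real.exp (K * s) * f s with hg
  have hgderiv : ∀ t : ℝ, 0 ≤ t → HasDerivAt g
      (K * Real.exp (K * t) * f t +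
        Real.exp (K * t) * (μ * (ν₂ - ν₁) * ∑ i, (ρinf i) ^ 2 * m t i)) t := by
    intro t ht
    have h1 : HasDerivAt (fun s => Real.exp (K * s)) (K * Real.exp (K * t)) t := by
      have h := ((hasDerivAt_id t).const_mul K).exp
      simp only [id] at h
      convert h using 1
      ring
    exact h1.mul (hode t ht)
  -- key inequality: deriv g ≤ 0 for t ≥ 0
  have hkey : ∀ t : ℝ, 0 ≤ t →
      K * Real.exp (K * t) * f t +
        Real.exp (K * t) * (μ * (ν₂ - ν₁) * ∑ i, (ρinf i) ^ 2 * m t i) ≤ 0 := by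
    intro t ht
    have hsum : K * f t ≤ μ * (ν₁ - ν₂) * ∑ i, (ρinf i) ^ 2 * m t i := by
      rw [hf]
      simp only [Finset.mul_sum]
      apply Finset.sum_le_sum
      intro i _
      have hci : c ≤ ρinf i := hc.2 ⟨i, rfl⟩
      have hmi := hm0 i t ht
      have hμν : 0 ≤ μ * (ν₁ - ν₂) := by
        have := sub_pos.mpr hν; positivity
      calc K * (ρinf i * m t i) = (μ * (ν₁ - ν₂)) * (c * (ρinf i * m t i)) := by ring
        _ ≤ (μ * (ν₁ - ν₂)) * (ρinf i * (ρinf i * m t i)) := by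
            apply mul_le_mul_of_nonneg_left _ hμν
            apply mul_le_mul_of_nonneg_right hci
            exact mul_nonneg (hρinf i).le hmi
        _ = μ * (ν₁ - ν₂) * ((ρinf i) ^ 2 * m t i) := by ring
    have hexp : 0 < Real.exp (K * t) := Real.exp_pos _
    nlinarith [hexp, hsum]
  have hgcont : ContinuousOn g (Set.Ici 0) :=
    (Real.continuous_exp.comp (continuous_const.mul continuous_id)).continuousOn.mul
      hfdiff.continuous.continuousOn
  have hgantitone : AntitoneOn g (Set.Ici 0) := by
    apply antitoneOn_of_deriv_nonpos (convex_Ici 0) hgcont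
    · intro t ht
      rw [interior_Ici] at ht
      exact ((hgderiv t (le_of_lt ht)).differentiableAt).differentiableWithinAt
    · intro t ht
      rw [interior_Ici] at ht
      rw [(hgderiv t ht.le).deriv]
      exact hkey t ht.le
  have hmain : ∀ t : ℝ, 0 ≤ t → f t ≤ Real.exp (-K * t) * f 0 := by
    intro t ht
    have h := hgantitone (Set.self_mem_Ici) (Set.mem_Ici.mpr ht) ht
    simp only [hg, mul_zero, Real.exp_zero, one_mul] at h
    have hexp : 0 < Real.exp (K * t) := Real.exp_pos _
    rw [neg_mul, Real.exp_neg, inv_mul_eq_div, le_div_iff₀ hexp, mul_comm]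
    exact h
  refine ⟨hmain, ?_⟩
  intro i
  have hρi := hρinf i
  have hbound : ∀ᶠ t in atTop, m t i ∈ Set.Icc (0 : ℝ) ((ρinf i)⁻¹ * (Real.exp (-K * t) * f 0)) := by
    filter_upwards [eventually_ge_atTop (0:ℝ)] with t ht
    constructor
    · exact hm0 i t ht
    · have h1 : ρinf i * m t i ≤ f t := by
        rw [hf]
        apply Finset.single_le_sum (f := fun j => ρinf j * m t j) _ (Finset.mem_univ i)
        intro j _
        exact mul_nonneg (hρinf j).le (hm0 j t ht)
      have h2 := hmain t ht
      rw [← le_div_iff₀' hρi] at h1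
      calc m t i ≤ f t / ρinf i := by linarith [h1, h2]
        _ ≤ (Real.exp (-K * t) * f 0) / ρinf i := by gcongr
        _ = (ρinf i)⁻¹ * (Real.exp (-K * t) * f 0) := by rw [div_eq_inv_mul]
  have hexp0 : Tendsto (fun t : ℝ => Real.exp (-K * t)) atTop (nhds 0) := by
    have h1 : Tendsto (fun t : ℝ => K * t) atTop atTop :=
      tendsto_id.const_mul_atTop hKpos
    have h2 := Real.tendsto_exp_neg_atTop_nhds_zero.comp h1
    have heq : (fun t : ℝ => Real.exp (-K * t)) = (fun x => Real.exp (-x)) ∘ fun t : ℝ => K * t := by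
      funext t; simp [neg_mul]
    rw [heq]; exact h2
  have hub : Tendsto (fun t : ℝ => (ρinf i)⁻¹ * (Real.exp (-K * t) * f 0)) atTop (nhds 0) := by
    have := (hexp0.mul_const (f 0)).const_mul (ρinf i)⁻¹
    simpa using this
  apply squeeze_zero' (hbound.mono fun t ht => ht.1) (hbound.mono fun t ht => ht.2) hub
end

section
/- Let n ≥ 1, let ρ^∞ ∈ ℝ^n have strictly positive entries, set c := min_i ρ^∞_i > 0, and let μ > 0 and ν₂ > ν₁ be real numbers. Suppose m : ℝ → ℝ^n is differentiable, m_i(t) ≥ 0 for all i and all t ≥ 0, ∑_i ρ^∞_i m_i(0) > 0, and d/dt ∑_i ρ^∞_i m_i(t) = μ(ν₂ − ν₁) ∑_i (ρ^∞_i)² m_i(t) for all t ≥ 0. Then ∑_i ρ^∞_i m_i(t) ≥ e^{cμ(ν₂−ν₁)t} ∑_i ρ^∞_i m_i(0) for all t ≥ 0, and consequently ∑_i ρ^∞_i m_i(t) → +∞ as t → +∞. -/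
open Finset Filter

/-- If `ν₂ > ν₁`, the linearised total weighted viral load
`∑_i ρ^∞_i m_i` grows at least exponentially (rate at least `cμ(ν₂−ν₁)` with
`c = min_i ρ^∞_i`) and blows up: the disease-free state is unstable. -/
theorem infection_blowup_nu2_gt_nu1
    (n : ℕ) (hn : 1 ≤ n) (ρinf : Fin n → ℝ) (hρinf : ∀ i, 0 < ρinf i)
    (c : ℝ) (hc : IsLeast (Set.range ρinf) c)
    (μ ν₁ ν₂ : ℝ) (hμ : 0 < μ) (hν : ν₁ < ν₂)
    (m : ℝ → Fin n → ℝ)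
    (hmdiff : ∀ i, Differentiable ℝ fun t => m t i)
    (hm0 : ∀ i, ∀ t : ℝ, 0 ≤ t → 0 ≤ m t i)
    (hinit : 0 < ∑ i, ρinf i * m 0 i)
    (hode : ∀ t : ℝ, 0 ≤ t → HasDerivAt (fun s => ∑ i, ρinf i * m s i)
      (μ * (ν₂ - ν₁) * ∑ i, (ρinf i) ^ 2 * m t i) t) :
    (∀ t : ℝ, 0 ≤ t →
      Real.exp (c * μ * (ν₂ - ν₁) * t) * ∑ i, ρinf i * m 0 i ≤ ∑ i, ρinf i * m t i) ∧
    Tendsto (fun t => ∑ i, ρinf i * m t i) atTop atTop := by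
  set k : ℝ := c * μ * (ν₂ - ν₁) with hk
  obtain ⟨⟨j, hj⟩, hcle⟩ := hc
  have hcpos : 0 < c := hj ▸ hρinf j
  have hcle' : ∀ i, c ≤ ρinf i := fun i => hcle ⟨i, rfl⟩
  have hkpos : 0 < k := by
    apply mul_pos (mul_pos hcpos hμ) (by linarith)
  set F : ℝ → ℝ := fun s => ∑ i, ρinf i * m s i with hF
  set g : ℝ → ℝ := fun s => Real.exp (-k * s) * F s with hg
  have hFdiff : Differentiable ℝ F := by
    have : F = fun s => ∑ i, ρinf i * m s i := rfl
    rw [this]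
    exact Differentiable.fun_sum fun i _ => (hmdiff i).const_mul _
  have hgd : ∀ t : ℝ, 0 ≤ t →
      HasDerivAt g (Real.exp (-k * t) *
        ((μ * (ν₂ - ν₁) * ∑ i, (ρinf i) ^ 2 * m t i) - k * F t)) t := by
    intro t ht
    have he : HasDerivAt (fun s : ℝ => Real.exp (-k * s)) (-k * Real.exp (-k * t)) t := by
      simpa [Function.comp_def, mul_comm] using (Real.hasDerivAt_exp (-k * t)).comp t
        ((hasDerivAt_id t).const_mul (-k))
    have := he.fun_mul (hode t ht)
    convert this using 1
    · rfl
    · rfl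
    · ring
  have hderiv_nonneg : ∀ t : ℝ, 0 ≤ t → 0 ≤ Real.exp (-k * t) *
      ((μ * (ν₂ - ν₁) * ∑ i, (ρinf i) ^ 2 * m t i) - k * F t) := by
    intro t ht
    apply mul_nonneg (Real.exp_nonneg _)
    have hsum : k * F t ≤ μ * (ν₂ - ν₁) * ∑ i, (ρinf i) ^ 2 * m t i := by
      have h1 : k * F t = μ * (ν₂ - ν₁) * ∑ i, c * (ρinf i * m t i) := by
        rw [hF, Finset.mul_sum, Finset.mul_sum]
        congr 1; ext i; ring
      rw [h1]
      apply mul_le_mul_of_nonneg_left _ (by nlinarith)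
      apply Finset.sum_le_sum
      intro i _
      have : c * (m t i) ≤ ρinf i * m t i :=
        mul_le_mul_of_nonneg_right (hcle' i) (hm0 i t ht)
      nlinarith [hm0 i t ht, hcle' i, (hρinf i).le]
    linarith
  have hgmono : MonotoneOn g (Set.Ici (0:ℝ)) := by
    apply monotoneOn_of_deriv_nonneg (convex_Ici 0)
    · exact (((Real.differentiable_exp.comp (differentiable_id.const_mul (-k))).mul
        hFdiff)).continuous.continuousOn
    · intro t ht
      rw [interior_Ici] at ht
      exact ((hgd t (le_of_lt ht)).differentiableAt).differentiableWithinAt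
    · intro t ht
      rw [interior_Ici] at ht
      rw [(hgd t ht.le).deriv]
      exact hderiv_nonneg t ht.le
  have hmain : ∀ t : ℝ, 0 ≤ t → Real.exp (k * t) * F 0 ≤ F t := by
    intro t ht
    have := hgmono (Set.self_mem_Ici) (Set.mem_Ici.mpr ht) ht
    simp only [hg, mul_zero, neg_mul, Real.exp_zero, one_mul, neg_zero] at this
    have h2 : Real.exp (k * t) * F 0 ≤ Real.exp (k * t) * (Real.exp (-(k * t)) * F t) := by
      exact mul_le_mul_of_nonneg_left this (Real.exp_nonneg _)
    calc Real.exp (k * t) * F 0 ≤ Real.exp (k * t) * (Real.exp (-(k * t)) * F t) := h2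
      _ = F t := by rw [← mul_assoc, ← Real.exp_add]; simp
  refine ⟨hmain, ?_⟩
  apply tendsto_atTop_mono' _ _ (Tendsto.atTop_mul_const hinit
    (Real.tendsto_exp_atTop.comp (tendsto_id.const_mul_atTop hkpos)))
  filter_upwards [eventually_ge_atTop (0:ℝ)] with t ht
  simpa using hmain t ht
end

section
/- Let n ≥ 1, χ > 0, fix an index i, and for every index j let p_{ij}, p_{ji} ≥ 0 with p_{ij} + p_{ji} > 0, and let u_j, w_j : ℝ → ℝ be differentiable with u_j'(t) = χ(p_{ij} w_j(t) − p_{ji} u_j(t)) and w_j'(t) = χ(p_{ji} u_j(t) − p_{ij} w_j(t)) for all t. Set ρ̄_j := u_j(0) + w_j(0). Then the total density ρ_i(t) := ∑_j u_j(t) converges as t → +∞ to ρ^∞_i = ∑_j (p_{ij}/(p_{ji} + p_{ij})) ρ̄_j. -/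
open Finset Filter

/-- The total density `ρ_i(t) = ∑_j ρ_{ji}(t)` of individuals in vertex `i`
in the commuter model converges to `ρ^∞_i = ∑_j p_{ij} ρ̄_{{i,j}}/(p_{ji}+p_{ij})`.
Here `u j t = ρ_{ji}(t)`, `w j t = ρ_{ij}(t)`, `p j = p_{ij}`, `q j = p_{ji}`. -/
theorem commuter_total_density_limit
    (n : ℕ) (hn : 1 ≤ n) (χ : ℝ) (hχ : 0 < χ)
    (p q : Fin n → ℝ) (hp : ∀ j, 0 ≤ p j) (hq : ∀ j, 0 ≤ q j)
    (hpq : ∀ j, 0 < p j + q j)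
    (u w : Fin n → ℝ → ℝ)
    (hu : ∀ j t, HasDerivAt (u j) (χ * (p j * w j t - q j * u j t)) t)
    (hw : ∀ j t, HasDerivAt (w j) (χ * (q j * u j t - p j * w j t)) t) :
    Tendsto (fun t => ∑ j, u j t) atTop
      (nhds (∑ j, (p j / (q j + p j)) * (u j 0 + w j 0))) := by
  have key : ∀ j : Fin n, Tendsto (u j) atTop
      (nhds ((p j / (q j + p j)) * (u j 0 + w j 0))) := by
    intro j
    set s : ℝ := u j 0 + w j 0 with hs
    set k : ℝ := χ * (p j + q j) with hk
    have hk0 : 0 < k := mul_pos hχ (hpq j)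
    set L : ℝ := p j / (q j + p j) * s with hL
    -- conservation of mass
    have hsum : ∀ t, u j t + w j t = s := by
      intro t
      have hconst : ∀ x y : ℝ,
          (fun t => u j t + w j t) x = (fun t => u j t + w j t) y := by
        apply is_const_of_deriv_eq_zero
        · intro t; exact ((hu j t).add (hw j t)).differentiableAt
        · intro t
          have h := ((hu j t).add (hw j t)).deriv
          rw [show (fun t => u j t + w j t) = u j + w j from rfl, h]; ring
      simpa using hconst t 0
    have hkL : k * L = χ * (p j * s) := by
      have h0 : q j + p j ≠ 0 := by
        have := hpq j; intro h; nlinarith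
      rw [hL, hk]; field_simp; ring
    -- u j t - L = (u j 0 - L) * exp (-(k*t))
    have hg : ∀ t, (u j t - L) * Real.exp (k * t) = u j 0 - L := by
      intro t
      have hconst : ∀ x y : ℝ,
          (fun t => (u j t - L) * Real.exp (k * t)) x
            = (fun t => (u j t - L) * Real.exp (k * t)) y := by
        apply is_const_of_deriv_eq_zero
        · intro t
          exact (((hu j t).sub_const L).mul
            (((hasDerivAt_id t).const_mul k).exp)).differentiableAt
        · intro t
          have hE : HasDerivAt (fun t => Real.exp (k * t))
              (Real.exp (k * t) * (k * 1)) t :=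
            ((hasDerivAt_id t).const_mul k).exp
          have hG := ((hu j t).sub_const L).mul hE
          rw [show (fun t => (u j t - L) * Real.exp (k * t)) = ((fun x => u j x - L) * fun t => Real.exp (k * t)) from rfl, hG.deriv]
          have hw' : w j t = s - u j t := by linarith [hsum t]
          rw [hw']
          have : χ * (p j * (s - u j t) - q j * u j t) = k * L - k * u j t := by
            rw [hkL, hk]; ring
          rw [this]; ring
      simpa using hconst t 0
    have hform : ∀ t, u j t = L + (u j 0 - L) * Real.exp (-(k * t)) := by
      intro t
      have h := hg t
      have hne : Real.exp (k * t) ≠ 0 := Real.exp_ne_zero _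
      rw [Real.exp_neg, ← h, mul_assoc, mul_inv_cancel₀ hne]; ring
    have hlim : Tendsto (fun t : ℝ => L + (u j 0 - L) * Real.exp (-(k * t)))
        atTop (nhds L) := by
      have h1 : Tendsto (fun t : ℝ => -(k * t)) atTop atBot := by
        have := (tendsto_id (α := ℝ)).const_mul_atTop hk0
        exact tendsto_neg_atBot_iff.mpr this
      have h2 : Tendsto (fun t : ℝ => Real.exp (-(k * t))) atTop (nhds 0) :=
        Real.tendsto_exp_atBot.comp h1
      have h3 : Tendsto (fun t : ℝ => (u j 0 - L) * Real.exp (-(k * t)))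
          atTop (nhds 0) := by
        simpa using h2.const_mul (u j 0 - L)
      simpa using (tendsto_const_nhds.add h3)
    have : Tendsto (u j) atTop (nhds L) := by
      refine hlim.congr ?_
      intro t; exact (hform t).symm
    simpa [hL, hs] using this
  exact tendsto_finset_sum _ (fun j _ => key j)
end
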